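/- Let S : ℤ → ℤ[x] be defined by S_{-1} = 0, S_0 = 1, S_{k+1} = x·S_k − S_{k-1}, and define σ_n ∈ ℤ[x] by σ_n = S_{n-1} if n > 0, σ_0 = 0, σ_n = −σ_{−n} if n < 0. Let P9 = −8 + 4x + 16x^2 − 10x^3 − 16x^4 + 4x^5 + 8x^6 + 2x^7 and R8 = 4 + 6x − 10x^2 − 14x^3 + 4x^4 + 8x^5 + 2x^6 in ℤ[x], and for integers p, q set Q(p,q) = −σ_p·σ_q·P9 + (σ_{p+1}·σ_{q+1} + σ_{p−1}·σ_{q−1})·R8 + 1. If p·q < 0, then the degree of the polynomial Q(p,q) equals |p| + |q| + 5. -/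
import Mathlib


open Polynomial in
/-- \`P9 = Q(8_9) - 1 = -8 + 4x + 16x² - 10x³ - 16x⁴ + 4x⁵ + 8x⁶ + 2x⁷\`. -/
noncomputable def kanenobuP9 : Polynomial ℤ :=
  -8 + 4 * X + 16 * X ^ 2 - 10 * X ^ 3 - 16 * X ^ 4 + 4 * X ^ 5 + 8 * X ^ 6 + 2 * X ^ 7

open Polynomial in
/-- \`R8 = (Q(8_8) - 1)/x = 4 + 6x - 10x² - 14x³ + 4x⁴ + 8x⁵ + 2x⁶\`. -/
noncomputable def kanenobuR8 : Polynomial ℤ :=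
  4 + 6 * X - 10 * X ^ 2 - 14 * X ^ 3 + 4 * X ^ 4 + 8 * X ^ 5 + 2 * X ^ 6

open Polynomial in
/-- If `p * q < 0`, then the degree of Kanenobu's `Q` polynomial
`Q(p,q) = -σ_p σ_q P9 + (σ_{p+1} σ_{q+1} + σ_{p-1} σ_{q-1}) R8 + 1`
equals `|p| + |q| + 5`. -/
theorem kanenobu_Q_degree_of_neg (S σ : ℤ → Polynomial ℤ)
    (hSm1 : S (-1) = 0) (hS0 : S 0 = 1)
    (hSrec : ∀ k : ℤ, 0 ≤ k → S (k + 1) = Polynomial.X * S k - S (k - 1))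
    (hσpos : ∀ n : ℤ, 0 < n → σ n = S (n - 1)) (hσ0 : σ 0 = 0)
    (hσneg : ∀ n : ℤ, n < 0 → σ n = -σ (-n))
    (p q : ℤ) (hpq : p * q < 0) :
    (-(σ p * σ q * kanenobuP9) +
        (σ (p + 1) * σ (q + 1) + σ (p - 1) * σ (q - 1)) * kanenobuR8 + 1).natDegree =
      p.natAbs + q.natAbs + 5 := by
  have hP9 : kanenobuP9.natDegree = 7 := by unfold kanenobuP9; compute_degree!
  have hR8 : kanenobuR8.natDegree = 6 := by unfold kanenobuR8; compute_degree!
  have hP9ne : kanenobuP9 ≠ 0 := fun h => by simp [h] at hP9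
  -- S n is monic of degree n for n : ℕ
  have key : ∀ n : ℕ, ((S (n : ℤ)).Monic ∧ (S (n : ℤ)).natDegree = n) ∧
      ((S ((n : ℤ) + 1)).Monic ∧ (S ((n : ℤ) + 1)).natDegree = n + 1) := by
    intro n
    induction n with
    | zero =>
      have h1 : S 1 = X := by
        have h := hSrec 0 le_rfl
        rw [hS0, show (0 : ℤ) - 1 = -1 by ring, hSm1] at h
        rw [show (1 : ℤ) = 0 + 1 by ring, h]; ring
      refine ⟨⟨?_, ?_⟩, ?_, ?_⟩ <;> push_cast <;>
        simp [hS0, h1, monic_one, monic_X, natDegree_X]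
    | succ n ih =>
      have hrec := hSrec ((n : ℤ) + 1) (by positivity)
      have hrec' : S ((n : ℤ) + 1 + 1) = X * S ((n : ℤ) + 1) - S (n : ℤ) := by
        rw [hrec]; norm_num
      have hXm : (X * S ((n : ℤ) + 1)).Monic := monic_X.mul ih.2.1
      have hXd : (X * S ((n : ℤ) + 1)).natDegree = n + 2 := by
        rw [natDegree_mul X_ne_zero ih.2.1.ne_zero, natDegree_X, ih.2.2]; omega
      have hlt : (S (n : ℤ)).natDegree < (X * S ((n : ℤ) + 1)).natDegree := by
        rw [hXd, ih.1.2]; omega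
      constructor
      · constructor
        · push_cast; exact ih.2.1
        · push_cast; exact ih.2.2
      · constructor
        · push_cast
          rw [hrec', sub_eq_add_neg]
          exact hXm.add_of_left (by
            rw [degree_neg]
            exact degree_lt_degree hlt)
        · push_cast
          rw [hrec', natDegree_sub_eq_left_of_natDegree_lt hlt, hXd]
  -- σ of positives
  have hσnat : ∀ n : ℕ, σ ((n : ℤ) + 1) = S (n : ℤ) := by
    intro n
    rw [hσpos _ (by positivity)]
    norm_num
  -- degree bound for σ
  have hσbd : ∀ n : ℤ, (σ n).natDegree + 1 ≤ n.natAbs ∨ σ n = 0 := by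
    have hp : ∀ n : ℤ, 0 < n → (σ n).natDegree + 1 = n.natAbs := by
      intro n hn
      obtain ⟨m, rfl⟩ : ∃ m : ℕ, n = (m : ℤ) + 1 := ⟨(n - 1).toNat, by omega⟩
      rw [hσnat, (key m).1.2]
      omega
    intro n
    rcases lt_trichotomy n 0 with h | h | h
    · left
      rw [hσneg n h, natDegree_neg, ← Int.natAbs_neg]
      exact (hp (-n) (by omega)).le
    · right; rw [h, hσ0]
    · exact Or.inl (hp n h).le
  have hσmul : ∀ (u v : ℤ) (k : ℕ), u.natAbs + v.natAbs ≤ k + 2 →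
      (σ u * σ v).natDegree ≤ k := by
    intro u v k h
    rcases hσbd u with hu | hu
    · rcases hσbd v with hv | hv
      · exact le_trans (natDegree_mul_le) (by omega)
      · simp [hv]
    · simp [hu]
  -- main symmetric-case lemma
  have main : ∀ p q : ℤ, 0 < p → q < 0 →
      (-(σ p * σ q * kanenobuP9) +
        (σ (p + 1) * σ (q + 1) + σ (p - 1) * σ (q - 1)) * kanenobuR8 + 1).natDegree =
      p.natAbs + q.natAbs + 5 := by
    intro p q hp hq
    obtain ⟨a, rfl⟩ : ∃ a : ℕ, p = (a : ℤ) + 1 := ⟨(p - 1).toNat, by omega⟩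
    obtain ⟨b, rfl⟩ : ∃ b : ℕ, q = -((b : ℤ) + 1) := ⟨(-q - 1).toNat, by omega⟩
    have hσp : σ ((a : ℤ) + 1) = S (a : ℤ) := hσnat a
    have hσq : σ (-((b : ℤ) + 1)) = -(S (b : ℤ)) := by
      rw [hσneg _ (by omega), neg_neg, hσnat b]
    -- the main term
    have hM : -(σ ((a : ℤ) + 1) * σ (-((b : ℤ) + 1)) * kanenobuP9) =
        S (a : ℤ) * S (b : ℤ) * kanenobuP9 := by rw [hσp, hσq]; ring
    set T : Polynomial ℤ :=
      (σ ((a : ℤ) + 1 + 1) * σ (-((b : ℤ) + 1) + 1) +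
        σ ((a : ℤ) + 1 - 1) * σ (-((b : ℤ) + 1) - 1)) * kanenobuR8 + 1 with hT
    have hexpr : -(σ ((a : ℤ) + 1) * σ (-((b : ℤ) + 1)) * kanenobuP9) +
        (σ ((a : ℤ) + 1 + 1) * σ (-((b : ℤ) + 1) + 1) +
          σ ((a : ℤ) + 1 - 1) * σ (-((b : ℤ) + 1) - 1)) * kanenobuR8 + 1 =
        T + S (a : ℤ) * S (b : ℤ) * kanenobuP9 := by
      rw [hT, hM]; ring
    have hMdeg : (S (a : ℤ) * S (b : ℤ) * kanenobuP9).natDegree = a + b + 7 := by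
      rw [natDegree_mul (mul_ne_zero (key a).1.1.ne_zero (key b).1.1.ne_zero) hP9ne,
        natDegree_mul (key a).1.1.ne_zero (key b).1.1.ne_zero, (key a).1.2, (key b).1.2, hP9]
    have hTdeg : T.natDegree ≤ a + b + 6 := by
      rw [hT]
      refine le_trans (natDegree_add_le _ _) ?_
      simp only [natDegree_one]
      refine max_le (le_trans natDegree_mul_le ?_) (by omega)
      have h1 : (σ ((a : ℤ) + 1 + 1) * σ (-((b : ℤ) + 1) + 1)).natDegree ≤ a + b := by
        apply hσmul
        omega
      have h2 : (σ ((a : ℤ) + 1 - 1) * σ (-((b : ℤ) + 1) - 1)).natDegree ≤ a + b := by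
        apply hσmul
        omega
      have h3 := natDegree_add_le (σ ((a : ℤ) + 1 + 1) * σ (-((b : ℤ) + 1) + 1))
        (σ ((a : ℤ) + 1 - 1) * σ (-((b : ℤ) + 1) - 1))
      omega
    rw [hexpr, natDegree_add_eq_right_of_natDegree_lt (by omega), hMdeg]
    have : ((a : ℤ) + 1).natAbs = a + 1 := by omega
    have : (-((b : ℤ) + 1)).natAbs = b + 1 := by omega
    omega
  rcases lt_trichotomy p 0 with h | h | h
  · have hq : 0 < q := by nlinarith
    have := main q p hq h
    rw [show -(σ p * σ q * kanenobuP9) +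
        (σ (p + 1) * σ (q + 1) + σ (p - 1) * σ (q - 1)) * kanenobuR8 + 1 =
      -(σ q * σ p * kanenobuP9) +
        (σ (q + 1) * σ (p + 1) + σ (q - 1) * σ (p - 1)) * kanenobuR8 + 1 by ring]
    omega
  · simp [h] at hpq
  · exact main p q h (by nlinarith)
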